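/- If ⌊(n+1)φ⌋ = ⌊nφ⌋ + 2 for a nonnegative integer n, then there exists a nonnegative integer m with ⌊m(φ+1)⌋ = ⌊nφ⌋ + 1, where φ = (1+√5)/2. -/

import Mathlib

noncomputable def phi : ℝ := (1 + Real.sqrt 5) / 2

lemma sqrt5_lt : (1:ℝ) < Real.sqrt 5 := by
  nlinarith [Real.sq_sqrt (by norm_num : (5:ℝ) ≥ 0), Real.sqrt_nonneg 5]

lemma phi_pos : (0:ℝ) < phi := by
  unfold phi; nlinarith [sqrt5_lt]

lemma phi_gt_one : (1:ℝ) < phi := by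
  unfold phi; nlinarith [sqrt5_lt]

lemma phi_conj : phi.HolderConjugate (phi + 1) := by
  rw [Real.holderConjugate_iff]
  constructor
  · exact phi_gt_one
  · unfold phi
    have h5 : Real.sqrt 5 ^ 2 = 5 := Real.sq_sqrt (by norm_num)
    have h1 : (1 + Real.sqrt 5) / 2 ≠ 0 := by nlinarith [sqrt5_lt]
    have h2 : (1 + Real.sqrt 5) / 2 + 1 ≠ 0 := by nlinarith [sqrt5_lt]
    field_simp
    nlinarith [sqrt5_lt]

lemma phi_irr : Irrational phi := by
  have h5 : Irrational (Real.sqrt 5) := by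
    rw [show (5:ℝ) = ((5:ℕ):ℝ) by norm_num]
    exact (by norm_num : Nat.Prime 5).irrational_sqrt
  unfold phi
  rw [show ((2:ℝ)) = ((2:ℕ):ℝ) by norm_num]
  have := Irrational.div_natCast (h5.natCast_add 1) (m := 2) (by norm_num)
  convert this using 2 <;> norm_num

theorem stmt19 (n : ℕ)
    (h : ⌊((n : ℝ) + 1) * phi⌋ = ⌊(n : ℝ) * phi⌋ + 2) :
    ∃ m : ℕ, ⌊(m : ℝ) * (phi + 1)⌋ = ⌊(n : ℝ) * phi⌋ + 1 := by
  set j : ℤ := ⌊(n : ℝ) * phi⌋ + 1 with hj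
  have hjpos : 0 < j := by
    have : (0:ℤ) ≤ ⌊(n : ℝ) * phi⌋ :=
      Int.floor_nonneg.2 (mul_nonneg (Nat.cast_nonneg n) phi_pos.le)
    omega
  have hsymm := Irrational.beattySeq_symmDiff_beattySeq_pos phi_conj phi_irr
  have hjmem : j ∈ {n : ℤ | 0 < n} := hjpos
  rw [← hsymm, Set.mem_symmDiff] at hjmem
  have hnot : j ∉ {x | ∃ k > 0, beattySeq phi k = x} := by
    rintro ⟨k, hk0, hk⟩
    unfold beattySeq at hk
    -- monotonicity contradiction: n < k < n+1
    rcases le_or_gt k n with hkn | hkn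
    · have : ⌊(k : ℝ) * phi⌋ ≤ ⌊(n : ℝ) * phi⌋ := by
        apply Int.floor_le_floor
        apply mul_le_mul_of_nonneg_right _ phi_pos.le
        exact_mod_cast hkn
      omega
    · have hkn' : (n:ℤ) + 1 ≤ k := hkn
      have : ⌊((n : ℝ) + 1) * phi⌋ ≤ ⌊(k : ℝ) * phi⌋ := by
        apply Int.floor_le_floor
        apply mul_le_mul_of_nonneg_right _ phi_pos.le
        push_cast
        exact_mod_cast hkn'
      omega
  rcases hjmem with ⟨hmem, -⟩ | ⟨⟨m, hm0, hm⟩, -⟩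
  · exact absurd hmem hnot
  · refine ⟨m.toNat, ?_⟩
    unfold beattySeq at hm
    rw [show ((m.toNat : ℕ) : ℝ) = (m : ℝ) by exact_mod_cast congrArg Int.cast (Int.toNat_of_nonneg hm0.le)]
    exact hm
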